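/- Let k ≥ 3, let G be a connected finite simple graph with at least one edge, and let H = G^{(k)} be the k-th power hypergraph of G. Let ρ be the unique eigenvalue of the adjacency tensor 𝒜(H) admitting a strictly positive eigenvector. Then the number of eigenvectors of 𝒜(H) associated with ρ, counted up to multiplication by nonzero complex scalars, is exactly k^{|V(G)|+|E(G)|(k−3)−1}; that is, |𝕍_ρ(𝒜(G^{(k)}))| = k^{|V(G)|+|E(G)|(k−3)−1}. -/

import Mathlib

open Finset

/-- `(𝒜(H) x^{k-1})_v = ∑_{e ∈ E(H), v ∈ e} ∏_{u ∈ e∖{v}} x_u` for a hypergraph with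
edge set `E` on a vertex type `V`. -/
noncomputable def adjApply {V : Type*} [DecidableEq V] (E : Finset (Finset V))
    (x : V → ℂ) (v : V) : ℂ :=
  ∑ e ∈ E.filter (fun e => v ∈ e), ∏ u ∈ e.erase v, x u

/-- The vertex type of the `k`-th power hypergraph `G^{(k)}`: the vertices of `G`
together with `k-2` new vertices for each edge of `G`. -/
abbrev PowerVert (k N : ℕ) (G : SimpleGraph (Fin N)) [DecidableRel G.Adj] : Type :=
  Fin N ⊕ ({ε : Sym2 (Fin N) // ε ∈ G.edgeFinset} × Fin (k - 2))

/-- The edge of `G^{(k)}` corresponding to an edge `ε = {u,v}` of `G`: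
`{u, v, w_{ε,1}, …, w_{ε,k-2}}`. -/
def powerEdge (k N : ℕ) (G : SimpleGraph (Fin N)) [DecidableRel G.Adj]
    (ε : {ε : Sym2 (Fin N) // ε ∈ G.edgeFinset}) : Finset (PowerVert k N G) :=
  ((univ.filter (fun u : Fin N => u ∈ ε.1)).image Sum.inl) ∪
    ((univ : Finset (Fin (k - 2))).image (fun t => Sum.inr (ε, t)))

/-- The edge set of the `k`-th power hypergraph `G^{(k)}`. -/
def powerEdges (k N : ℕ) (G : SimpleGraph (Fin N)) [DecidableRel G.Adj] :
    Finset (Finset (PowerVert k N G)) :=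
  univ.image (powerEdge k N G)

section Basic

variable (k N : ℕ) (G : SimpleGraph (Fin N)) [DecidableRel G.Adj]

lemma mem_inl_pe {ε : {ε : Sym2 (Fin N) // ε ∈ G.edgeFinset}} {u : Fin N}
    (hu : u ∈ ε.1) : Sum.inl u ∈ powerEdge k N G ε := by
  simp [powerEdge, hu]

lemma mem_inr_pe (ε : {ε : Sym2 (Fin N) // ε ∈ G.edgeFinset}) (t : Fin (k - 2)) :
    Sum.inr (ε, t) ∈ powerEdge k N G ε := by
  simp [powerEdge]

lemma filter_mem_eq (ε : {ε : Sym2 (Fin N) // ε ∈ G.edgeFinset}) {a b : Fin N}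
    (hab : ε.1 = s(a, b)) :
    (univ.filter (fun u : Fin N => u ∈ ε.1)) = {a, b} := by
  ext u
  simp [hab, Sym2.mem_iff, Finset.mem_insert]

lemma pe_exists_endpoints (ε : {ε : Sym2 (Fin N) // ε ∈ G.edgeFinset}) :
    ∃ a b : Fin N, a ≠ b ∧ ε.1 = s(a, b) := by
  obtain ⟨ε, hε⟩ := ε
  induction ε with
  | _ a b =>
    refine ⟨a, b, ?_, rfl⟩
    intro h
    exact G.not_isDiag_of_mem_edgeSet (SimpleGraph.mem_edgeFinset.mp hε)
      (Sym2.mk_isDiag_iff.mpr h)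

lemma pe_card (hk : 3 ≤ k) (ε : {ε : Sym2 (Fin N) // ε ∈ G.edgeFinset}) :
    (powerEdge k N G ε).card = k := by
  obtain ⟨a, b, hab, hε⟩ := pe_exists_endpoints N G ε
  rw [powerEdge, Finset.card_union_of_disjoint, Finset.card_image_of_injective _
    Sum.inl_injective, Finset.card_image_of_injective, filter_mem_eq N G ε hε]
  · rw [Finset.card_insert_of_notMem (by simp [hab]), Finset.card_singleton,
      Finset.card_univ, Fintype.card_fin]
    omega
  · intro t₁ t₂ h
    simpa using h
  · simp only [Finset.disjoint_left, Finset.mem_image]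
    rintro x ⟨u, -, rfl⟩ ⟨t, -, h⟩
    exact absurd h (by simp)

lemma prod_pe {M : Type*} [CommMonoid M] (ε : {ε : Sym2 (Fin N) // ε ∈ G.edgeFinset})
    (f : PowerVert k N G → M) :
    ∏ w ∈ powerEdge k N G ε, f w =
      (∏ u ∈ univ.filter (fun u : Fin N => u ∈ ε.1), f (Sum.inl u)) *
        ∏ t : Fin (k - 2), f (Sum.inr (ε, t)) := by
  rw [powerEdge, Finset.prod_union, Finset.prod_image, Finset.prod_image]
  · intro t₁ _ t₂ _ h; simpa using h
  · intro u₁ _ u₂ _ h; exact Sum.inl_injective h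
  · simp only [Finset.disjoint_left, Finset.mem_image]
    rintro x ⟨u, -, rfl⟩ ⟨t, -, h⟩
    exact absurd h (by simp)

lemma sum_pe {M : Type*} [AddCommMonoid M] (ε : {ε : Sym2 (Fin N) // ε ∈ G.edgeFinset})
    (f : PowerVert k N G → M) :
    ∑ w ∈ powerEdge k N G ε, f w =
      (∑ u ∈ univ.filter (fun u : Fin N => u ∈ ε.1), f (Sum.inl u)) +
        ∑ t : Fin (k - 2), f (Sum.inr (ε, t)) := by
  rw [powerEdge, Finset.sum_union, Finset.sum_image, Finset.sum_image]
  · intro t₁ _ t₂ _ h; simpa using h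
  · intro u₁ _ u₂ _ h; exact Sum.inl_injective h
  · simp only [Finset.disjoint_left, Finset.mem_image]
    rintro x ⟨u, -, rfl⟩ ⟨t, -, h⟩
    exact absurd h (by simp)

lemma mem_powerEdges {e : Finset (PowerVert k N G)} :
    e ∈ powerEdges k N G ↔ ∃ ε, e = powerEdge k N G ε := by
  simp only [powerEdges, Finset.mem_image, Finset.mem_univ, true_and]
  exact ⟨fun ⟨ε, h⟩ => ⟨ε, h.symm⟩, fun ⟨ε, h⟩ => ⟨ε, h.symm⟩⟩

end Basic

section Conn

variable (k N : ℕ) (G : SimpleGraph (Fin N)) [DecidableRel G.Adj]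

lemma connSpread (hconn : G.Connected) (P : PowerVert k N G → Prop)
    (hspread : ∀ ε : {ε : Sym2 (Fin N) // ε ∈ G.edgeFinset},
      ∀ v ∈ powerEdge k N G ε, ∀ u ∈ powerEdge k N G ε, P v → P u)
    (v₀ : PowerVert k N G) (hP0 : P v₀) : ∀ v, P v := by
  -- step: adjacency propagation among graph vertices
  have adjStep : ∀ a b : Fin N, G.Adj a b → P (Sum.inl a) → P (Sum.inl b) := by
    intro a b hab hPa
    have hmem : s(a, b) ∈ G.edgeFinset := SimpleGraph.mem_edgeFinset.mpr hab
    exact hspread ⟨s(a,b), hmem⟩ _ (mem_inl_pe k N G (by simp)) _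
      (mem_inl_pe k N G (by simp)) hPa
  have walkStep : ∀ a b : Fin N, G.Walk a b → P (Sum.inl a) → P (Sum.inl b) := by
    intro a b w
    induction w with
    | nil => exact id
    | cons h p ih => exact fun hPa => ih (adjStep _ _ h hPa)
  -- P holds at some graph vertex
  have hbase : ∃ a : Fin N, P (Sum.inl a) := by
    cases v₀ with
    | inl a => exact ⟨a, hP0⟩
    | inr p =>
      obtain ⟨ε, t⟩ := p
      obtain ⟨a, b, -, hε⟩ := pe_exists_endpoints N G ε
      exact ⟨a, hspread ε _ (mem_inr_pe k N G ε t) _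
        (mem_inl_pe k N G (by rw [hε]; simp)) hP0⟩
  obtain ⟨a, hPa⟩ := hbase
  have hall : ∀ b : Fin N, P (Sum.inl b) := fun b =>
    walkStep a b (hconn a b).some hPa
  intro v
  cases v with
  | inl b => exact hall b
  | inr p =>
    obtain ⟨ε, t⟩ := p
    obtain ⟨a', b', -, hε⟩ := pe_exists_endpoints N G ε
    exact hspread ε _ (mem_inl_pe k N G (by rw [hε]; simp)) _
      (mem_inr_pe k N G ε t) (hall a')

end Conn

noncomputable def adjR {V : Type*} [DecidableEq V] (E : Finset (Finset V))
    (x : V → ℝ) (v : V) : ℝ :=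
  ∑ e ∈ E.filter (fun e => v ∈ e), ∏ u ∈ e.erase v, x u

lemma adjApply_ofReal {V : Type*} [DecidableEq V] (E : Finset (Finset V))
    (x : V → ℝ) (v : V) :
    adjApply E (fun i => (x i : ℂ)) v = ((adjR E x v : ℝ) : ℂ) := by
  simp [adjApply, adjR]

/-- equality case for products of nonneg reals -/
lemma prod_eq_prod_forces {α : Type*} {s : Finset α} {f g : α → ℝ}
    (hf : ∀ i ∈ s, 0 ≤ f i) (hfg : ∀ i ∈ s, f i ≤ g i) (hg : ∀ i ∈ s, 0 < g i)
    (h : ∏ i ∈ s, f i = ∏ i ∈ s, g i) : ∀ i ∈ s, f i = g i := by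
  classical
  induction s using Finset.induction with
  | empty => intro i hi; simp at hi
  | insert a s hnot ih =>
    rw [Finset.prod_insert hnot, Finset.prod_insert hnot] at h
    have hQpos : 0 < ∏ i ∈ s, g i :=
      Finset.prod_pos (fun i hi => hg i (Finset.mem_insert_of_mem hi))
    have hPQ : ∏ i ∈ s, f i ≤ ∏ i ∈ s, g i :=
      Finset.prod_le_prod (fun i hi => hf i (Finset.mem_insert_of_mem hi))
        (fun i hi => hfg i (Finset.mem_insert_of_mem hi))
    have hfa : f a = g a := by
      by_contra hne
      have hlt : f a < g a := lt_of_le_of_ne (hfg a (Finset.mem_insert_self a s)) hne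
      have : f a * ∏ i ∈ s, f i < g a * ∏ i ∈ s, g i := by
        calc f a * ∏ i ∈ s, f i ≤ f a * ∏ i ∈ s, g i := by
              exact mul_le_mul_of_nonneg_left hPQ (hf a (Finset.mem_insert_self a s))
          _ < g a * ∏ i ∈ s, g i := by
              exact mul_lt_mul_of_pos_right hlt hQpos
      exact absurd h (ne_of_lt this)
    have hga : 0 < g a := hg a (Finset.mem_insert_self a s)
    have hrest : ∏ i ∈ s, f i = ∏ i ∈ s, g i := by
      rw [hfa] at h
      exact mul_left_cancel₀ (ne_of_gt hga) h
    intro i hi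
    rcases Finset.mem_insert.mp hi with rfl | hi'
    · exact hfa
    · exact ih (fun j hj => hf j (Finset.mem_insert_of_mem hj))
        (fun j hj => hfg j (Finset.mem_insert_of_mem hj))
        (fun j hj => hg j (Finset.mem_insert_of_mem hj)) hrest i hi'

/-- a complex number whose real part equals its absolute value is real (equal to it) -/
lemma eq_abs_of_re_eq_abs {z : ℂ} (h : z.re = ‖z‖) :
    z = ((‖z‖ : ℝ) : ℂ) := by
  have h2 : (‖z‖) * (‖z‖) = z.re * z.re + z.im * z.im := by
    rw [← sq, Complex.sq_norm, Complex.normSq_apply]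
  rw [← h] at h2
  have him : z.im = 0 := by nlinarith [sq_nonneg z.im]
  apply Complex.ext
  · simp [h]
  · simp [him]

section Main

variable {k N : ℕ} {G : SimpleGraph (Fin N)} [DecidableRel G.Adj]

/-- normalized phase solutions -/
def IsSol (k : ℕ) (N : ℕ) (G : SimpleGraph (Fin N)) [DecidableRel G.Adj]
    (v₀ : PowerVert k N G) (s : PowerVert k N G → ℂ) : Prop :=
  s v₀ = 1 ∧ (∀ v, s v ^ k = 1) ∧
    ∀ ε : {ε : Sym2 (Fin N) // ε ∈ G.edgeFinset}, ∏ u ∈ powerEdge k N G ε, s u = 1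

lemma sol_ne_zero (hk : 3 ≤ k) {v₀ : PowerVert k N G} {s : PowerVert k N G → ℂ}
    (hs : IsSol k N G v₀ s) (v : PowerVert k N G) : s v ≠ 0 := by
  intro h
  have := hs.2.1 v
  rw [h, zero_pow (by omega)] at this
  exact zero_ne_one this

lemma sol_prod_erase (hk : 3 ≤ k) {v₀ : PowerVert k N G} {s : PowerVert k N G → ℂ}
    (hs : IsSol k N G v₀ s) {e : Finset (PowerVert k N G)} (he : e ∈ powerEdges k N G)
    {v : PowerVert k N G} (hv : v ∈ e) :
    ∏ u ∈ e.erase v, s u = s v ^ (k - 1) := by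
  obtain ⟨ε, rfl⟩ := (mem_powerEdges k N G).mp he
  have h1 : s v * ∏ u ∈ (powerEdge k N G ε).erase v, s u = 1 := by
    rw [Finset.mul_prod_erase _ _ hv, hs.2.2 ε]
  have h2 : s v * s v ^ (k - 1) = 1 := by
    rw [← pow_succ']
    have : k - 1 + 1 = k := by omega
    rw [this, hs.2.1 v]
  exact mul_left_cancel₀ (sol_ne_zero hk hs v) (h1.trans h2.symm)

/-- sufficiency: every normalized phase solution gives an eigenvector -/
lemma sol_eigen (hk : 3 ≤ k) {ρ : ℝ} {y : PowerVert k N G → ℝ}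
    (hρ : ∀ v, adjApply (powerEdges k N G) (fun i => (y i : ℂ)) v =
      (ρ : ℂ) * (y v : ℂ) ^ (k - 1))
    {v₀ : PowerVert k N G} {s : PowerVert k N G → ℂ} (hs : IsSol k N G v₀ s)
    (v : PowerVert k N G) :
    adjApply (powerEdges k N G) (fun u => s u * (y u : ℂ)) v =
      (ρ : ℂ) * (s v * (y v : ℂ)) ^ (k - 1) := by
  have hstep : ∀ e ∈ (powerEdges k N G).filter (fun e => v ∈ e),
      ∏ u ∈ e.erase v, (s u * (y u : ℂ)) =
        s v ^ (k - 1) * ∏ u ∈ e.erase v, (y u : ℂ) := by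
    intro e he
    rw [Finset.prod_mul_distrib,
      sol_prod_erase hk hs (Finset.mem_filter.mp he).1 (Finset.mem_filter.mp he).2]
  rw [adjApply, Finset.sum_congr rfl hstep, ← Finset.mul_sum]
  have : ∑ e ∈ (powerEdges k N G).filter (fun e => v ∈ e), ∏ u ∈ e.erase v, (y u : ℂ)
      = adjApply (powerEdges k N G) (fun i => (y i : ℂ)) v := rfl
  rw [this, hρ v, mul_pow]
  ring

end Main

section Perron

variable {k N : ℕ} {G : SimpleGraph (Fin N)} [DecidableRel G.Adj]

lemma card_of_mem_powerEdges (hk : 3 ≤ k) {e : Finset (PowerVert k N G)}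
    (he : e ∈ powerEdges k N G) : e.card = k := by
  obtain ⟨ε, rfl⟩ := (mem_powerEdges k N G).mp he
  exact pe_card k N G hk ε

lemma adjR_scale (hk : 3 ≤ k) (z : PowerVert k N G → ℝ) (t : ℝ) (v : PowerVert k N G) :
    adjR (powerEdges k N G) (fun u => t * z u) v
      = t ^ (k - 1) * adjR (powerEdges k N G) z v := by
  rw [adjR, adjR, Finset.mul_sum]
  refine Finset.sum_congr rfl fun e he => ?_
  obtain ⟨he1, he2⟩ := Finset.mem_filter.mp he
  have hcard : (e.erase v).card = k - 1 := by
    rw [Finset.card_erase_of_mem he2, card_of_mem_powerEdges hk he1]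
  rw [Finset.prod_mul_distrib, Finset.prod_const, hcard]

lemma adjR_mono {z z' : PowerVert k N G → ℝ} (hz : ∀ u, 0 ≤ z u)
    (hzz' : ∀ u, z u ≤ z' u) (v : PowerVert k N G) :
    adjR (powerEdges k N G) z v ≤ adjR (powerEdges k N G) z' v :=
  Finset.sum_le_sum fun e _ =>
    Finset.prod_le_prod (fun u _ => hz u) (fun u _ => hzz' u)

lemma adjR_pos {y : PowerVert k N G → ℝ} (hy : ∀ i, 0 < y i)
    (ε : {ε : Sym2 (Fin N) // ε ∈ G.edgeFinset}) {v : PowerVert k N G}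
    (hv : v ∈ powerEdge k N G ε) : 0 < adjR (powerEdges k N G) y v := by
  rw [adjR]
  refine Finset.sum_pos' (fun e _ => Finset.prod_nonneg fun u _ => (hy u).le) ?_
  refine ⟨powerEdge k N G ε, Finset.mem_filter.mpr ⟨?_, hv⟩, ?_⟩
  · exact (mem_powerEdges k N G).mpr ⟨ε, rfl⟩
  · exact Finset.prod_pos fun u _ => hy u

lemma hρ_real {ρ : ℝ} {y : PowerVert k N G → ℝ}
    (hρ : ∀ v, adjApply (powerEdges k N G) (fun i => (y i : ℂ)) v =
      (ρ : ℂ) * (y v : ℂ) ^ (k - 1)) (v : PowerVert k N G) :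
    adjR (powerEdges k N G) y v = ρ * y v ^ (k - 1) := by
  have := hρ v
  rw [adjApply_ofReal] at this
  exact_mod_cast this

lemma rho_pos (hk : 3 ≤ k) (hne : G.edgeFinset.Nonempty) {ρ : ℝ}
    {y : PowerVert k N G → ℝ} (hy : ∀ i, 0 < y i)
    (hρ : ∀ v, adjApply (powerEdges k N G) (fun i => (y i : ℂ)) v =
      (ρ : ℂ) * (y v : ℂ) ^ (k - 1)) : 0 < ρ := by
  obtain ⟨ε0, hε0⟩ := hne
  have hk2 : 0 < k - 2 := by omega
  set v : PowerVert k N G := Sum.inr (⟨ε0, hε0⟩, ⟨0, hk2⟩) with hv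
  have hpos : 0 < adjR (powerEdges k N G) y v :=
    adjR_pos hy ⟨ε0, hε0⟩ (mem_inr_pe k N G ⟨ε0, hε0⟩ ⟨0, hk2⟩)
  rw [hρ_real hρ v] at hpos
  by_contra h
  push_neg at h
  have : ρ * y v ^ (k - 1) ≤ 0 :=
    mul_nonpos_of_nonpos_of_nonneg h (pow_nonneg (hy v).le _)
  linarith

end Perron

section Necessity

variable {k N : ℕ} {G : SimpleGraph (Fin N)} [DecidableRel G.Adj]

lemma necessity (hk : 3 ≤ k) (hconn : G.Connected) (hne : G.edgeFinset.Nonempty)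
    {ρ : ℝ} {y : PowerVert k N G → ℝ} (hy : ∀ i, 0 < y i)
    (hρ : ∀ v, adjApply (powerEdges k N G) (fun i => (y i : ℂ)) v =
      (ρ : ℂ) * (y v : ℂ) ^ (k - 1))
    (v₀ : PowerVert k N G)
    {x : PowerVert k N G → ℂ} (hx0 : x ≠ 0)
    (heig : ∀ v, adjApply (powerEdges k N G) x v = (ρ : ℂ) * x v ^ (k - 1)) :
    ∃ c : ℂ, c ≠ 0 ∧ ∃ s : PowerVert k N G → ℂ, IsSol k N G v₀ s ∧
      x = c • (fun v => s v * (y v : ℂ)) := by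
  have hρpos : 0 < ρ := rho_pos hk hne hy hρ
  set E := powerEdges k N G with hE
  set z : PowerVert k N G → ℝ := fun v => ‖x v‖ with hz
  have hznn : ∀ v, 0 ≤ z v := fun v => (norm_nonneg _)
  -- subinvariance
  have hsub : ∀ v, ρ * z v ^ (k - 1) ≤ adjR E z v := by
    intro v
    have h1 : ‖(ρ : ℂ) * x v ^ (k - 1)‖ = ρ * z v ^ (k - 1) := by
      rw [norm_mul, norm_pow, Complex.norm_of_nonneg hρpos.le]
    calc ρ * z v ^ (k - 1) = ‖adjApply E x v‖ := by rw [heig v, h1]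
      _ ≤ ∑ e ∈ E.filter (fun e => v ∈ e), ‖∏ u ∈ e.erase v, x u‖ :=
          norm_sum_le _ _
      _ = adjR E z v := by
          refine Finset.sum_congr rfl fun e _ => ?_
          rw [norm_prod]
  -- the maximum ratio
  have hnonempty : Nonempty (PowerVert k N G) := ⟨Sum.inr (⟨hne.choose, hne.choose_spec⟩,
    ⟨0, by omega⟩)⟩
  obtain ⟨vM, -, hmax⟩ := Finset.exists_max_image Finset.univ (fun v => z v / y v)
    Finset.univ_nonempty
  set t : ℝ := z vM / y vM with ht
  have hzle : ∀ v, z v ≤ t * y v := by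
    intro v
    have h := hmax v (Finset.mem_univ v)
    rw [div_le_iff₀ (hy v)] at h
    linarith
  have htpos : 0 < t := by
    obtain ⟨w, hw⟩ := Function.ne_iff.mp hx0
    have hzw : 0 < z w := norm_pos_iff.mpr hw
    have h1 : z w / y w ≤ t := hmax w (Finset.mem_univ w)
    have h2 : 0 < z w / y w := div_pos hzw (hy w)
    linarith
  have htyPos : ∀ v, 0 < t * y v := fun v => mul_pos htpos (hy v)
  -- maximality spreads over edges
  have hadjty : ∀ v, adjR E (fun u => t * y u) v = ρ * (t * y v) ^ (k - 1) := by
    intro v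
    rw [adjR_scale hk, hρ_real hρ, mul_pow]; ring
  have hspread : ∀ ε : {ε : Sym2 (Fin N) // ε ∈ G.edgeFinset},
      ∀ v ∈ powerEdge k N G ε, ∀ u ∈ powerEdge k N G ε,
        z v = t * y v → z u = t * y u := by
    intro ε v hv u hu hPv
    have heF : powerEdge k N G ε ∈ E.filter (fun e => v ∈ e) :=
      Finset.mem_filter.mpr ⟨(mem_powerEdges k N G).mpr ⟨ε, rfl⟩, hv⟩
    have hS1 : adjR E z v ≤ adjR E (fun u => t * y u) v := adjR_mono hznn hzle v
    have hS3 : adjR E z v = adjR E (fun u => t * y u) v := by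
      have h4 := hsub v
      rw [hPv] at h4
      rw [hadjty v] at hS1 ⊢
      linarith
    have hterm : ∀ e ∈ E.filter (fun e => v ∈ e),
        ∏ u' ∈ e.erase v, z u' = ∏ u' ∈ e.erase v, (t * y u') := by
      refine (Finset.sum_eq_sum_iff_of_le (fun e _ => Finset.prod_le_prod
        (fun u' _ => hznn u') (fun u' _ => hzle u'))).mp ?_
      exact hS3
    have hprodEq := hterm _ heF
    have hforce := prod_eq_prod_forces (fun u' _ => hznn u') (fun u' _ => hzle u')
      (fun u' _ => htyPos u') hprodEq
    by_cases huv : u = v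
    · rw [huv]; exact hPv
    · exact hforce u (Finset.mem_erase.mpr ⟨huv, hu⟩)
  have hbase : z vM = t * y vM := by
    rw [ht, div_mul_cancel₀ _ (ne_of_gt (hy vM))]
  have hzy : ∀ v, z v = t * y v :=
    connSpread k N G hconn _ hspread vM hbase
  have hzpos : ∀ v, 0 < z v := fun v => (hzy v) ▸ htyPos v
  have hxne : ∀ v, x v ≠ 0 := fun v h => by
    have := hzpos v
    rw [hz] at this
    simp only [h, map_zero, norm_zero] at this
    exact lt_irrefl _ this
  -- the phase vector
  set s : PowerVert k N G → ℂ := fun v => x v / ((z v : ℝ) : ℂ) with hsdef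
  have hcast_ne : ∀ v, ((z v : ℝ) : ℂ) ≠ 0 := fun v => by
    exact_mod_cast ne_of_gt (hzpos v)
  have hsne : ∀ v, s v ≠ 0 := fun v => div_ne_zero (hxne v) (hcast_ne v)
  have hxs : ∀ v, x v = s v * ((z v : ℝ) : ℂ) := fun v =>
    (div_mul_cancel₀ _ (hcast_ne v)).symm
  -- phase condition on each edge
  have hadjz : ∀ v, adjR E z v = ρ * z v ^ (k - 1) := by
    intro v
    have hzfun : z = fun u => t * y u := funext hzy
    rw [hzfun, hadjty v]
  have hphase : ∀ v, ∀ e ∈ E.filter (fun e => v ∈ e),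
      ∏ u ∈ e.erase v, s u = s v ^ (k - 1) := by
    intro v
    set w : ℂ := x v ^ (k - 1) with hw
    have hwne : w ≠ 0 := pow_ne_zero _ (hxne v)
    have habsw : ‖w‖ = z v ^ (k - 1) := by rw [hw, norm_pow]
    -- termwise: real part equals modulus
    have hre_le : ∀ e ∈ E.filter (fun e => v ∈ e),
        ((∏ u ∈ e.erase v, x u) * (starRingEnd ℂ) w).re ≤
          (∏ u ∈ e.erase v, z u) * z v ^ (k - 1) := by
      intro e _
      have habs : ‖(∏ u ∈ e.erase v, x u) * (starRingEnd ℂ) w‖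
          = (∏ u ∈ e.erase v, z u) * z v ^ (k - 1) := by
        rw [norm_mul, Complex.norm_conj, habsw, norm_prod]
      rw [← habs]
      exact Complex.re_le_norm _
    have hsum_eq : ∑ e ∈ E.filter (fun e => v ∈ e),
        ((∏ u ∈ e.erase v, x u) * (starRingEnd ℂ) w).re
        = ∑ e ∈ E.filter (fun e => v ∈ e),
          (∏ u ∈ e.erase v, z u) * z v ^ (k - 1) := by
      have hL : (∑ e ∈ E.filter (fun e => v ∈ e),
          (∏ u ∈ e.erase v, x u) * (starRingEnd ℂ) w)
          = (ρ : ℂ) * ((z v ^ (k - 1) : ℝ) : ℂ) ^ 2 := by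
        rw [← Finset.sum_mul]
        have : (∑ e ∈ E.filter (fun e => v ∈ e), ∏ u ∈ e.erase v, x u)
            = adjApply E x v := rfl
        rw [this, heig v, hw, mul_assoc, Complex.mul_conj, ← Complex.sq_norm, habsw]
        push_cast
        ring
      have hR : ∑ e ∈ E.filter (fun e => v ∈ e),
          (∏ u ∈ e.erase v, z u) * z v ^ (k - 1)
          = ρ * (z v ^ (k - 1)) ^ 2 := by
        rw [← Finset.sum_mul]
        have : (∑ e ∈ E.filter (fun e => v ∈ e), ∏ u ∈ e.erase v, z u)
            = adjR E z v := rfl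
        rw [this, hadjz v]
        ring
      rw [← Complex.re_sum, hL, hR,
        show ((ρ:ℂ) * (((z v ^ (k - 1) : ℝ)):ℂ) ^ 2) = (((ρ * (z v ^ (k-1))^2 : ℝ)):ℂ) by
          push_cast; ring, Complex.ofReal_re]
    have hre_eq := (Finset.sum_eq_sum_iff_of_le hre_le).mp hsum_eq
    intro e he
    have hq := hre_eq e he
    have habs : ‖(∏ u ∈ e.erase v, x u) * (starRingEnd ℂ) w‖
        = (∏ u ∈ e.erase v, z u) * z v ^ (k - 1) := by
      rw [norm_mul, Complex.norm_conj, habsw, norm_prod]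
    have hqeq : (∏ u ∈ e.erase v, x u) * (starRingEnd ℂ) w
        = (((∏ u ∈ e.erase v, z u) * z v ^ (k - 1) : ℝ) : ℂ) := by
      have h5 := eq_abs_of_re_eq_abs (z := (∏ u ∈ e.erase v, x u) * (starRingEnd ℂ) w)
        (by rw [habs]; exact hq)
      rw [habs] at h5
      exact h5
    -- solve for the product of x over erase
    have hnormsq : (starRingEnd ℂ) w * w = (((z v ^ (k - 1)) ^ 2 : ℝ) : ℂ) := by
      rw [mul_comm, Complex.mul_conj, ← Complex.sq_norm, habsw]
    have hprodz_pos : 0 < ∏ u ∈ e.erase v, z u :=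
      Finset.prod_pos fun u _ => hzpos u
    have hzk_ne : (((z v ^ (k - 1) : ℝ)) : ℂ) ≠ 0 := by
      exact_mod_cast ne_of_gt (pow_pos (hzpos v) _)
    have hxprod : ∏ u ∈ e.erase v, x u
        = (((∏ u ∈ e.erase v, z u : ℝ)) : ℂ) * w / (((z v ^ (k - 1) : ℝ)) : ℂ) := by
      have hmul : (∏ u ∈ e.erase v, x u) * ((((z v ^ (k - 1)) ^ 2 : ℝ)) : ℂ)
          = (((∏ u ∈ e.erase v, z u) * z v ^ (k - 1) : ℝ) : ℂ) * w := by
        rw [← hnormsq, ← mul_assoc, hqeq]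
      rw [eq_div_iff hzk_ne]
      apply mul_right_cancel₀ hzk_ne
      calc (∏ u ∈ e.erase v, x u) * (((z v ^ (k - 1) : ℝ)) : ℂ)
            * (((z v ^ (k - 1) : ℝ)) : ℂ)
          = (∏ u ∈ e.erase v, x u) * ((((z v ^ (k - 1)) ^ 2 : ℝ)) : ℂ) := by
            push_cast; ring
        _ = (((∏ u ∈ e.erase v, z u) * z v ^ (k - 1) : ℝ) : ℂ) * w := hmul
        _ = (((∏ u ∈ e.erase v, z u : ℝ)) : ℂ) * w * (((z v ^ (k - 1) : ℝ)) : ℂ) := by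
            push_cast; ring
    -- convert to s
    have hsprod : ∏ u ∈ e.erase v, s u
        = (∏ u ∈ e.erase v, x u) / (((∏ u ∈ e.erase v, z u : ℝ)) : ℂ) := by
      rw [hsdef]
      rw [Finset.prod_div_distrib]
      congr 1
      push_cast
      rfl
    rw [hsprod, hxprod]
    have hzprod_ne : (((∏ u ∈ e.erase v, z u : ℝ)) : ℂ) ≠ 0 := by
      exact_mod_cast ne_of_gt hprodz_pos
    have hsv : s v ^ (k - 1) = w / (((z v ^ (k - 1) : ℝ)) : ℂ) := by
      rw [hsdef]
      simp only [div_pow, hw]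
      push_cast
      rfl
    rw [hsv, div_div, mul_comm ((((z v ^ (k - 1) : ℝ)) : ℂ)) _,
      mul_div_mul_left _ _ hzprod_ne]
  -- s^k is constant
  have hsk : ∀ v, ∀ e ∈ E.filter (fun e => v ∈ e), s v ^ k = ∏ u ∈ e, s u := by
    intro v e he
    obtain ⟨he1, he2⟩ := Finset.mem_filter.mp he
    rw [← Finset.mul_prod_erase _ _ he2, hphase v e he, ← pow_succ']
    congr 1
    omega
  have hskconst : ∀ v, s v ^ k = s v₀ ^ k := by
    refine connSpread k N G hconn _ ?_ v₀ rfl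
    intro ε v hv u hu hPv
    have heF : ∀ w ∈ powerEdge k N G ε, powerEdge k N G ε ∈ E.filter (fun e => w ∈ e) :=
      fun w hw => Finset.mem_filter.mpr ⟨(mem_powerEdges k N G).mpr ⟨ε, rfl⟩, hw⟩
    rw [hsk u _ (heF u hu), ← hsk v _ (heF v hv), hPv]
  -- assemble
  refine ⟨((t : ℝ) : ℂ) * s v₀, ?_, fun v => s v / s v₀, ⟨?_, ?_, ?_⟩, ?_⟩
  · exact mul_ne_zero (by exact_mod_cast ne_of_gt htpos) (hsne v₀)
  · exact div_self (hsne v₀)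
  · intro v
    rw [div_pow, hskconst v, div_self (pow_ne_zero _ (hsne v₀))]
  · intro ε
    have hmem : Sum.inr (ε, (⟨0, by omega⟩ : Fin (k - 2))) ∈ powerEdge k N G ε :=
      mem_inr_pe k N G ε _
    have heF : powerEdge k N G ε ∈ E.filter
        (fun e => Sum.inr (ε, (⟨0, by omega⟩ : Fin (k - 2))) ∈ e) :=
      Finset.mem_filter.mpr ⟨(mem_powerEdges k N G).mpr ⟨ε, rfl⟩, hmem⟩
    rw [Finset.prod_div_distrib, Finset.prod_const, pe_card k N G hk ε,
      ← hsk _ _ heF, hskconst, div_self (pow_ne_zero _ (hsne v₀))]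
  · funext v
    simp only [Pi.smul_apply, smul_eq_mul]
    have h2 : ((z v : ℝ) : ℂ) = ((t : ℝ) : ℂ) * ((y v : ℝ) : ℂ) := by
      rw [hzy v]; push_cast; ring
    have h3 : ∀ a b c d : ℂ, b ≠ 0 → a * b * (c / b * d) = c * (a * d) := by
      intro a b c d hb; field_simp
    rw [h3 _ _ _ _ (hsne v₀), ← h2]
    exact hxs v

end Necessity

section Counting

def buildA (k N : ℕ) (G : SimpleGraph (Fin N)) [DecidableRel G.Adj] (u0 : Fin N)
    (f : {u : Fin N // u ≠ u0} → ZMod k)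
    (g : ({ε : Sym2 (Fin N) // ε ∈ G.edgeFinset} × Fin (k - 3)) → ZMod k) :
    PowerVert k N G → ZMod k
  | Sum.inl u => if h : u = u0 then 0 else f ⟨u, h⟩
  | Sum.inr (ε, t) => if h : (t : ℕ) < k - 3 then g (ε, ⟨t, h⟩)
      else -((∑ u ∈ univ.filter (fun u : Fin N => u ∈ ε.1),
          (if h : u = u0 then 0 else f ⟨u, h⟩)) + ∑ j : Fin (k - 3), g (ε, j))

variable {k N : ℕ} {G : SimpleGraph (Fin N)} [DecidableRel G.Adj]

lemma buildA_inl (u0 : Fin N) (f : {u : Fin N // u ≠ u0} → ZMod k)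
    (g : ({ε : Sym2 (Fin N) // ε ∈ G.edgeFinset} × Fin (k - 3)) → ZMod k) (u : Fin N) :
    buildA k N G u0 f g (Sum.inl u) = if h : u = u0 then 0 else f ⟨u, h⟩ := rfl

lemma buildA_inr (u0 : Fin N) (f : {u : Fin N // u ≠ u0} → ZMod k)
    (g : ({ε : Sym2 (Fin N) // ε ∈ G.edgeFinset} × Fin (k - 3)) → ZMod k)
    (ε : {ε : Sym2 (Fin N) // ε ∈ G.edgeFinset}) (t : Fin (k - 2)) :
    buildA k N G u0 f g (Sum.inr (ε, t)) = if h : (t : ℕ) < k - 3 then g (ε, ⟨t, h⟩)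
      else -((∑ u ∈ univ.filter (fun u : Fin N => u ∈ ε.1),
          (if h : u = u0 then 0 else f ⟨u, h⟩)) + ∑ j : Fin (k - 3), g (ε, j)) := rfl

lemma sum_fin_split (hk : 3 ≤ k) {M : Type*} [AddCommMonoid M] (f : Fin (k - 2) → M) :
    ∑ t, f t = (∑ j : Fin (k - 3), f (Fin.castLE (by omega) j)) + f ⟨k - 3, by omega⟩ := by
  have key := Fin.sum_univ_castSucc (n := k - 3)
    (f := fun j : Fin (k - 3 + 1) => f ⟨j.1, by omega⟩)
  have h1 : ∑ t, f t = ∑ j : Fin (k - 3 + 1), f ⟨j.1, by omega⟩ :=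
    Fintype.sum_equiv (finCongr (by omega : k - 2 = k - 3 + 1)) _ _
      (fun t => congrArg f (Fin.ext rfl))
  rw [h1, key]
  exact congrArg₂ (· + ·)
    (Finset.sum_congr rfl fun j _ => congrArg f (Fin.ext rfl)) (congrArg f (Fin.ext rfl))

lemma AS_last (hk : 3 ≤ k) {a : PowerVert k N G → ZMod k}
    (ha : ∀ ε : {ε : Sym2 (Fin N) // ε ∈ G.edgeFinset},
      ∑ u ∈ powerEdge k N G ε, a u = 0)
    (ε : {ε : Sym2 (Fin N) // ε ∈ G.edgeFinset}) :
    a (Sum.inr (ε, ⟨k - 3, by omega⟩)) =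
      -((∑ u ∈ univ.filter (fun u : Fin N => u ∈ ε.1), a (Sum.inl u)) +
        ∑ j : Fin (k - 3), a (Sum.inr (ε, Fin.castLE (by omega) j))) := by
  have h0 := ha ε
  rw [sum_pe, sum_fin_split hk (fun t => a (Sum.inr (ε, t)))] at h0
  linear_combination h0

lemma fin_last_eq (hk : 3 ≤ k) (t : Fin (k - 2)) (h : ¬ ((t : ℕ) < k - 3)) :
    t = ⟨k - 3, by omega⟩ := by
  have htv : (t : ℕ) = k - 3 := by have := t.2; omega
  exact Fin.ext htv

lemma card_isSol (hk : 3 ≤ k) (u0 : Fin N) :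
    Nat.card {s : PowerVert k N G → ℂ // IsSol k N G (Sum.inl u0) s}
      = k ^ (N - 1 + G.edgeFinset.card * (k - 3)) := by
  haveI : NeZero k := ⟨by omega⟩
  have hle3 : k - 3 ≤ k - 2 := by omega
  set ζ : ℂ := Complex.exp (2 * Real.pi * Complex.I / k) with hζdef
  have hζ : IsPrimitiveRoot ζ k := Complex.isPrimitiveRoot_exp k (by omega)
  have hcastval : ∀ a : ZMod k, (((a.val : ℕ)) : ZMod k) = a := fun a => by
    simp [ZMod.natCast_val, ZMod.cast_id]
  have step1 : Nat.card {a : PowerVert k N G → ZMod k //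
      a (Sum.inl u0) = 0 ∧ ∀ ε : {ε : Sym2 (Fin N) // ε ∈ G.edgeFinset},
        ∑ u ∈ powerEdge k N G ε, a u = 0}
      = Nat.card {s : PowerVert k N G → ℂ // IsSol k N G (Sum.inl u0) s} := by
    refine Nat.card_eq_of_bijective (fun a => ⟨fun v => ζ ^ (a.1 v).val, ?_, ?_, ?_⟩) ?_
    · show ζ ^ ((a.1 (Sum.inl u0)).val) = 1
      rw [a.2.1, ZMod.val_zero, pow_zero]
    · intro v
      show (ζ ^ ((a.1 v).val)) ^ k = 1
      rw [← pow_mul]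
      exact (hζ.pow_eq_one_iff_dvd _).mpr (dvd_mul_left _ _)
    · intro ε
      show ∏ u ∈ powerEdge k N G ε, ζ ^ (a.1 u).val = 1
      rw [Finset.prod_pow_eq_pow_sum]
      refine (hζ.pow_eq_one_iff_dvd _).mpr ?_
      refine (ZMod.natCast_eq_zero_iff _ k).mp ?_
      rw [Nat.cast_sum]
      rw [Finset.sum_congr rfl fun u _ => hcastval (a.1 u)]
      exact a.2.2 ε
    constructor
    · intro a b hab
      apply Subtype.ext
      funext v
      have h1 := congrFun (congrArg Subtype.val hab) v
      simp only at h1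
      have h2 := hζ.pow_inj (ZMod.val_lt (a.1 v)) (ZMod.val_lt (b.1 v)) h1
      rw [← hcastval (a.1 v), ← hcastval (b.1 v), h2]
    · intro s
      have hch : ∀ v, ∃ i, i < k ∧ ζ ^ i = s.1 v := by
        intro v
        obtain ⟨i, hi, hipow⟩ := hζ.eq_pow_of_pow_eq_one (s.2.2.1 v)
        exact ⟨i, hi, hipow⟩
      set a : PowerVert k N G → ZMod k :=
        fun v => ((Classical.choose (hch v) : ℕ) : ZMod k) with ha
      have haval : ∀ v, (a v).val = Classical.choose (hch v) := fun v =>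
        ZMod.val_cast_of_lt (Classical.choose_spec (hch v)).1
      have hapow : ∀ v, ζ ^ (a v).val = s.1 v := fun v => by
        rw [haval v]; exact (Classical.choose_spec (hch v)).2
      refine ⟨⟨a, ?_, ?_⟩, ?_⟩
      · have h1 : ζ ^ (a (Sum.inl u0)).val = ζ ^ 0 := by
          rw [hapow (Sum.inl u0), s.2.1, pow_zero]
        have h2 := hζ.pow_inj (ZMod.val_lt (a (Sum.inl u0))) (by omega) h1
        rw [← hcastval (a (Sum.inl u0)), h2, Nat.cast_zero]
      · intro ε
        have h1 : ζ ^ (∑ u ∈ powerEdge k N G ε, (a u).val) = 1 := by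
          rw [← Finset.prod_pow_eq_pow_sum]
          rw [Finset.prod_congr rfl fun u _ => hapow u]
          exact s.2.2.2 ε
        have h2 := (hζ.pow_eq_one_iff_dvd _).mp h1
        have h3 := (ZMod.natCast_eq_zero_iff _ k).mpr h2
        rw [Nat.cast_sum, Finset.sum_congr rfl fun u _ => hcastval (a u)] at h3
        exact h3
      · apply Subtype.ext
        funext v
        exact hapow v
  rw [← step1]
  -- step 2 : bijection with free coordinates
  have step2 : Nat.card {a : PowerVert k N G → ZMod k //
      a (Sum.inl u0) = 0 ∧ ∀ ε : {ε : Sym2 (Fin N) // ε ∈ G.edgeFinset},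
        ∑ u ∈ powerEdge k N G ε, a u = 0}
      = Nat.card (({u : Fin N // u ≠ u0} → ZMod k) ×
        (({ε : Sym2 (Fin N) // ε ∈ G.edgeFinset} × Fin (k - 3)) → ZMod k)) := by
    refine Nat.card_eq_of_bijective (fun a => (fun u => a.1 (Sum.inl u.1),
      fun p => a.1 (Sum.inr (p.1, Fin.castLE hle3 p.2)))) ⟨?_, ?_⟩
    · intro a b hab
      have h1 : ∀ u : {u : Fin N // u ≠ u0}, a.1 (Sum.inl u.1) = b.1 (Sum.inl u.1) :=
        fun u => congrFun (congrArg Prod.fst hab) u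
      have h2 : ∀ (ε : {ε : Sym2 (Fin N) // ε ∈ G.edgeFinset}) (j : Fin (k - 3)),
          a.1 (Sum.inr (ε, Fin.castLE hle3 j)) = b.1 (Sum.inr (ε, Fin.castLE hle3 j)) :=
        fun ε j => congrFun (congrArg Prod.snd hab) (ε, j)
      have hinl : ∀ u : Fin N, a.1 (Sum.inl u) = b.1 (Sum.inl u) := by
        intro u
        by_cases h : u = u0
        · rw [h, a.2.1, b.2.1]
        · exact h1 ⟨u, h⟩
      apply Subtype.ext
      funext v
      cases v with
      | inl u => exact hinl u
      | inr p =>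
        obtain ⟨ε, t⟩ := p
        by_cases h : (t : ℕ) < k - 3
        · have h3 := h2 ε ⟨t.1, h⟩
          have ht : Fin.castLE hle3 (⟨t.1, h⟩ : Fin (k - 3)) = t := Fin.ext rfl
          rwa [ht] at h3
        · rw [fin_last_eq hk t h, AS_last hk a.2.2 ε, AS_last hk b.2.2 ε]
          rw [Finset.sum_congr rfl fun u hu => hinl u]
          rw [Finset.sum_congr rfl fun (j : Fin (k - 3)) _ => h2 ε j]
    · intro fg
      have hm1 : buildA k N G u0 fg.1 fg.2 (Sum.inl u0) = 0 := by
        rw [buildA_inl, dif_pos rfl]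
      have hm2 : ∀ ε : {ε : Sym2 (Fin N) // ε ∈ G.edgeFinset},
          ∑ u ∈ powerEdge k N G ε, buildA k N G u0 fg.1 fg.2 u = 0 := by
        intro ε
        rw [sum_pe]
        have h2 : ∑ t : Fin (k - 2), buildA k N G u0 fg.1 fg.2 (Sum.inr (ε, t))
            = (∑ j : Fin (k - 3), fg.2 (ε, j)) +
              -((∑ u ∈ univ.filter (fun u : Fin N => u ∈ ε.1),
                  (if h : u = u0 then 0 else fg.1 ⟨u, h⟩)) +
                ∑ j : Fin (k - 3), fg.2 (ε, j)) := by
          rw [sum_fin_split hk]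
          refine congrArg₂ (· + ·) ?_ ?_
          · refine Finset.sum_congr rfl fun j _ => ?_
            rw [buildA_inr,
              dif_pos (show ((Fin.castLE hle3 j : Fin (k - 2)) : ℕ) < k - 3 from j.2)]
            exact congrArg (fun t => fg.2 (ε, t)) (Fin.ext rfl)
          · rw [buildA_inr, dif_neg (by simp)]
        rw [h2]
        have h3 : ∑ u ∈ univ.filter (fun u : Fin N => u ∈ ε.1),
            buildA k N G u0 fg.1 fg.2 (Sum.inl u)
            = ∑ u ∈ univ.filter (fun u : Fin N => u ∈ ε.1),
              (if h : u = u0 then 0 else fg.1 ⟨u, h⟩) :=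
          Finset.sum_congr rfl fun u _ => buildA_inl u0 fg.1 fg.2 u
        rw [h3]
        ring
      refine ⟨⟨buildA k N G u0 fg.1 fg.2, hm1, hm2⟩, ?_⟩
      refine Prod.ext ?_ ?_
      · funext u
        show buildA k N G u0 fg.1 fg.2 (Sum.inl u.1) = fg.1 u
        rw [buildA_inl, dif_neg u.2]
      · funext p
        show buildA k N G u0 fg.1 fg.2 (Sum.inr (p.1, Fin.castLE hle3 p.2)) = fg.2 p
        rw [buildA_inr,
          dif_pos (show ((Fin.castLE hle3 p.2 : Fin (k - 2)) : ℕ) < k - 3 from p.2.2)]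
        exact congrArg (fun t => fg.2 (p.1, t)) (Fin.ext rfl)
  rw [step2]
  rw [Nat.card_eq_fintype_card, Fintype.card_prod, Fintype.card_fun, Fintype.card_fun,
    ZMod.card, Fintype.card_prod, Fintype.card_coe, Fintype.card_fin]
  rw [show Fintype.card {u : Fin N // u ≠ u0} = N - 1 by
    rw [Fintype.card_subtype_compl, Fintype.card_subtype_eq, Fintype.card_fin]]
  rw [← pow_add]

end Counting

/-- for a connected simple graph `G` with at least one edge and `k ≥ 3`,
the number of eigenvectors of `𝒜(G^{(k)})` associated with the Perron–Frobenius
eigenvalue `ρ`, up to nonzero complex scalars, is `k^{|V(G)| + |E(G)|(k-3) - 1}`. -/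
theorem stmt8 (k N : ℕ) (hk : 3 ≤ k) (G : SimpleGraph (Fin N)) [DecidableRel G.Adj]
    (hconn : G.Connected) (hne : G.edgeFinset.Nonempty)
    (ρ : ℝ) (y : PowerVert k N G → ℝ) (hy : ∀ i, 0 < y i)
    (hρ : ∀ v, adjApply (powerEdges k N G) (fun i => (y i : ℂ)) v =
      (ρ : ℂ) * (y v : ℂ) ^ (k - 1)) :
    Nat.card (Quot (fun
        (x z : {x : PowerVert k N G → ℂ //
          x ≠ 0 ∧ ∀ v, adjApply (powerEdges k N G) x v = (ρ : ℂ) * x v ^ (k - 1)}) =>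
      ∃ c : ℂ, c ≠ 0 ∧ z.1 = c • x.1)) = k ^ (N + G.edgeFinset.card * (k - 3) - 1) := by
  haveI hnonempty : Nonempty (Fin N) := hconn.nonempty
  have hN : 0 < N := Fin.pos_iff_nonempty.mpr hnonempty
  set u0 : Fin N := ⟨0, hN⟩ with hu0
  set v₀ : PowerVert k N G := Sum.inl u0 with hv₀
  set T := {x : PowerVert k N G → ℂ //
    x ≠ 0 ∧ ∀ v, adjApply (powerEdges k N G) x v = (ρ : ℂ) * x v ^ (k - 1)} with hT
  set r : T → T → Prop := fun x z => ∃ c : ℂ, c ≠ 0 ∧ z.1 = c • x.1 with hr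
  have hequiv : Equivalence r := by
    constructor
    · intro a; exact ⟨1, one_ne_zero, (one_smul _ _).symm⟩
    · rintro a b ⟨c, hc, h⟩
      exact ⟨c⁻¹, inv_ne_zero hc, by rw [h, smul_smul, inv_mul_cancel₀ hc, one_smul]⟩
    · rintro a b c ⟨c₁, hc₁, h₁⟩ ⟨c₂, hc₂, h₂⟩
      exact ⟨c₂ * c₁, mul_ne_zero hc₂ hc₁, by rw [h₂, h₁, smul_smul]⟩
  have hyC_ne : ∀ v, ((y v : ℝ) : ℂ) ≠ 0 := fun v => by
    exact_mod_cast ne_of_gt (hy v)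
  -- the map from normalized solutions
  have hvecne : ∀ s : {s : PowerVert k N G → ℂ // IsSol k N G v₀ s},
      (fun v => s.1 v * ((y v : ℝ) : ℂ)) ≠ 0 := by
    intro s h
    have h1 := congrFun h v₀
    simp only [Pi.zero_apply] at h1
    exact (mul_ne_zero (sol_ne_zero hk s.2 v₀) (hyC_ne v₀)) h1
  set Φ : {s : PowerVert k N G → ℂ // IsSol k N G v₀ s} → Quot r :=
    fun s => Quot.mk r ⟨fun v => s.1 v * ((y v : ℝ) : ℂ), hvecne s,
      fun v => sol_eigen hk hρ s.2 v⟩ with hΦ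
  have hbij : Function.Bijective Φ := by
    constructor
    · intro s₁ s₂ heq
      have h1 := Quot.eq.mp heq
      obtain ⟨c, hc, h⟩ := (hequiv.eqvGen_iff).mp h1
      simp only at h
      have h2 := congrFun h v₀
      simp only [Pi.smul_apply, smul_eq_mul, s₁.2.1, s₂.2.1, one_mul] at h2
      have hc1 : c = 1 := by
        have h4 : (c - 1) * ((y v₀ : ℝ) : ℂ) = 0 := by linear_combination -h2
        rcases mul_eq_zero.mp h4 with h5 | h5
        · exact sub_eq_zero.mp h5
        · exact absurd h5 (hyC_ne v₀)
      apply Subtype.ext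
      funext v
      have h3 := congrFun h v
      simp only [Pi.smul_apply, smul_eq_mul, hc1, one_mul] at h3
      exact mul_right_cancel₀ (hyC_ne v) h3.symm
    · refine Quot.ind ?_
      intro x
      obtain ⟨c, hc, s, hsol, hxeq⟩ :=
        necessity hk hconn hne hy hρ v₀ x.2.1 x.2.2
      exact ⟨⟨s, hsol⟩, (Quot.sound ⟨c, hc, hxeq⟩)⟩
  rw [← Nat.card_eq_of_bijective Φ hbij, card_isSol hk u0]
  congr 1
  have h5 : 0 < G.edgeFinset.card * (k - 3) + 1 := by omega
  generalize G.edgeFinset.card * (k - 3) = m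
  omega
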